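/- arXiv:2001.02131 — 4 statements merged into one kernel-verified Lean document; each statement's English description precedes it below -/
import Mathlib

section
/- For all constants k₃, k₄, k₅ ∈ ℝ, every matrix S ∈ ℝ^{3×3} and every vector h ∈ ℝ³ one has (S⊗h) : Θ : (S⊗h) = k₃ |h|² tr(S)² + k₄ ([h]ₓ : S_skw)² + 4 k₅ |S_skw h|²; in particular (S⊗h) : Θ : (S⊗h) ≥ 0 whenever k₃, k₄, k₅ ≥ 0. -/
open Matrix MeasureTheory
open scoped BigOperators

noncomputable section

/-- Kronecker delta on `Fin 3`. -/
def kd (i j : Fin 3) : ℝ := if i = j then 1 else 0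

/-- Euclidean inner product on `ℝ³`. -/
def dot3 (a b : Fin 3 → ℝ) : ℝ := ∑ i, a i * b i

/-- Squared Euclidean norm on `ℝ³`. -/
def normSq (a : Fin 3 → ℝ) : ℝ := ∑ i, (a i) ^ 2

/-- Cross product on `ℝ³`. -/
def cross3 (a b : Fin 3 → ℝ) : Fin 3 → ℝ :=
  ![a 1 * b 2 - a 2 * b 1, a 2 * b 0 - a 0 * b 2, a 0 * b 1 - a 1 * b 0]

/-- Outer product `a ⊗ b`. -/
def outer (a b : Fin 3 → ℝ) : Matrix (Fin 3) (Fin 3) ℝ := Matrix.of fun i j => a i * b j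

/-- Symmetric part of a matrix. -/
def symPart (A : Matrix (Fin 3) (Fin 3) ℝ) : Matrix (Fin 3) (Fin 3) ℝ := (1 / 2 : ℝ) • (A + Aᵀ)

/-- Skew-symmetric part of a matrix. -/
def skwPart (A : Matrix (Fin 3) (Fin 3) ℝ) : Matrix (Fin 3) (Fin 3) ℝ := (1 / 2 : ℝ) • (A - Aᵀ)

/-- Frobenius inner product `A : B = tr(Aᵀ B)`. -/
def frob (A B : Matrix (Fin 3) (Fin 3) ℝ) : ℝ := ∑ i, ∑ j, A i j * B i j

/-- Squared Frobenius norm. -/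
def frobSq (A : Matrix (Fin 3) (Fin 3) ℝ) : ℝ := ∑ i, ∑ j, (A i j) ^ 2

/-- The hat map `[a]ₓ`, so that `[a]ₓ b = a × b`. -/
def hatm (a : Fin 3 → ℝ) : Matrix (Fin 3) (Fin 3) ℝ :=
  !![0, -a 2, a 1; a 2, 0, -a 0; -a 1, a 0, 0]

/-- The vee map, left inverse of the hat map: `vee A = (A₃₂, A₁₃, A₂₁)`. -/
def vee (A : Matrix (Fin 3) (Fin 3) ℝ) : Fin 3 → ℝ := ![A 2 1, A 0 2, A 1 0]

/-- Entries of the fourth-order tensor `Λ`. -/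
def lamE (k₁ k₂ : ℝ) (i j k l : Fin 3) : ℝ :=
  k₁ * kd i j * kd k l + k₂ * (kd i k * kd j l - kd i l * kd j k)

/-- The contraction `S : Λ : T`. -/
def lamQ (k₁ k₂ : ℝ) (S T : Matrix (Fin 3) (Fin 3) ℝ) : ℝ :=
  ∑ i, ∑ j, ∑ k, ∑ l, S i j * lamE k₁ k₂ i j k l * T k l

/-- Entries of the sixth-order tensor `Θ`. -/
def thE (k₃ k₄ k₅ : ℝ) (i j k l m n : Fin 3) : ℝ :=
  k₃ * kd i j * kd l m * kd k n
    + k₅ * (kd i l * kd m n * kd j k - kd m i * kd l n * kd j k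
        - kd l j * kd m n * kd i k + kd j m * kd l n * kd i k)
    + k₄ * (kd k n * kd j m * kd i l + kd k m * kd j l * kd i n + kd k l * kd j n * kd i m
        - kd k n * kd j l * kd i m - kd k m * kd j n * kd i l - kd k l * kd j m * kd i n)

/-- The contraction `(S⊗h) : Θ : (S⊗h)`. -/
def thQ (k₃ k₄ k₅ : ℝ) (S : Matrix (Fin 3) (Fin 3) ℝ) (h : Fin 3 → ℝ) : ℝ :=
  ∑ i, ∑ j, ∑ k, ∑ l, ∑ m, ∑ n, thE k₃ k₄ k₅ i j k l m n * S i j * h k * S l m * h n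

/-- Jacobian matrix of a vector field, `(∇f)_{ij} = ∂_j f_i`. -/
def jac (f : (Fin 3 → ℝ) → Fin 3 → ℝ) (x : Fin 3 → ℝ) : Matrix (Fin 3) (Fin 3) ℝ :=
  Matrix.of fun i j => fderiv ℝ f x (Pi.single j 1) i

/-- Divergence of a vector field. -/
def divg (f : (Fin 3 → ℝ) → Fin 3 → ℝ) (x : Fin 3 → ℝ) : ℝ := ∑ i, jac f x i i

/-- Curl of a vector field. -/
def curl (f : (Fin 3 → ℝ) → Fin 3 → ℝ) (x : Fin 3 → ℝ) : Fin 3 → ℝ :=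
  ![jac f x 2 1 - jac f x 1 2, jac f x 0 2 - jac f x 2 0, jac f x 1 0 - jac f x 0 1]

/-- Row-wise divergence of a matrix field, `(div A)_i = ∑_j ∂_j A_{ij}`. -/
def matDiv (A : (Fin 3 → ℝ) → Matrix (Fin 3) (Fin 3) ℝ) (x : Fin 3 → ℝ) : Fin 3 → ℝ :=
  fun i => ∑ j, fderiv ℝ (fun y => A y i j) x (Pi.single j 1)


@[simp] lemma kd00 : kd 0 0 = 1 := rfl
@[simp] lemma kd01 : kd 0 1 = 0 := rfl
@[simp] lemma kd02 : kd 0 2 = 0 := rfl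
@[simp] lemma kd10 : kd 1 0 = 0 := rfl
@[simp] lemma kd11 : kd 1 1 = 1 := rfl
@[simp] lemma kd12 : kd 1 2 = 0 := rfl
@[simp] lemma kd20 : kd 2 0 = 0 := rfl
@[simp] lemma kd21 : kd 2 1 = 0 := rfl
@[simp] lemma kd22 : kd 2 2 = 1 := rfl

set_option maxHeartbeats 2000000 in
/-- `(S⊗h) : Θ : (S⊗h) = k₃ |h|² tr(S)² + k₄ ([h]ₓ : S_skw)² + 4 k₅ |S_skw h|²`;
in particular it is nonnegative whenever `k₃, k₄, k₅ ≥ 0`. -/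
theorem thQ_repr (k₃ k₄ k₅ : ℝ) (S : Matrix (Fin 3) (Fin 3) ℝ) (h : Fin 3 → ℝ) :
    thQ k₃ k₄ k₅ S h
        = k₃ * normSq h * (Matrix.trace S) ^ 2 + k₄ * frob (hatm h) (skwPart S) ^ 2
          + 4 * k₅ * normSq (Matrix.mulVec (skwPart S) h) ∧
      (0 ≤ k₃ → 0 ≤ k₄ → 0 ≤ k₅ → 0 ≤ thQ k₃ k₄ k₅ S h) := by
  have key : thQ k₃ k₄ k₅ S h
      = k₃ * normSq h * (Matrix.trace S) ^ 2 + k₄ * frob (hatm h) (skwPart S) ^ 2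
        + 4 * k₅ * normSq (Matrix.mulVec (skwPart S) h) := by
    simp only [thQ, thE, Fin.sum_univ_three, kd00, kd01, kd02, kd10, kd11, kd12, kd20, kd21,
      kd22, mul_zero, zero_mul, mul_one, one_mul, add_zero, zero_add, sub_zero, zero_sub,
      neg_zero, neg_mul, neg_neg, normSq, frob, hatm, skwPart, Matrix.trace, Matrix.diag,
      Matrix.mulVec, dotProduct, Matrix.smul_apply, Matrix.sub_apply,
      Matrix.transpose_apply, smul_eq_mul, Matrix.cons_val', Matrix.cons_val_zero,
      Matrix.cons_val_one, Matrix.head_cons, Matrix.empty_val', Matrix.cons_val_fin_one,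
      Matrix.head_fin_const, Matrix.cons_val_two, Matrix.tail_cons, Matrix.of_apply]
    ring
  refine ⟨key, fun h3 h4 h5 => ?_⟩
  rw [key]
  have a1 : 0 ≤ normSq h := Finset.sum_nonneg fun i _ => sq_nonneg _
  have a2 : 0 ≤ normSq (Matrix.mulVec (skwPart S) h) :=
    Finset.sum_nonneg fun i _ => sq_nonneg _
  positivity
end
end

section
/- Tensor representation of the Oseen–Frank energy density: for all constants k₁,…,k₅ ∈ ℝ, every matrix S ∈ ℝ^{3×3} and every vector h ∈ ℝ³, setting c := 2 vee(S_skw), one has S : Λ : S + (S⊗h) : Θ : (S⊗h) = k₁ tr(S)² + k₂ |c|² + k₃ |h|² tr(S)² + k₄ (h·c)² + k₅ |h×c|². -/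
open Matrix MeasureTheory
open scoped BigOperators

noncomputable section

lemma lamQ_closed (k₁ k₂ : ℝ) (S : Matrix (Fin 3) (Fin 3) ℝ) :
    lamQ k₁ k₂ S S
      = k₁ * (S 0 0 + S 1 1 + S 2 2) ^ 2
        + k₂ * ((S 2 1 - S 1 2) ^ 2 + (S 0 2 - S 2 0) ^ 2 + (S 1 0 - S 0 1) ^ 2) := by
  simp only [lamQ, Fin.sum_univ_three]
  simp only [lamE, kd, Fin.isValue, Fin.reduceEq, reduceIte]
  norm_num
  ring

set_option maxHeartbeats 4000000 in
lemma thQ_closed (k₃ k₄ k₅ : ℝ) (S : Matrix (Fin 3) (Fin 3) ℝ) (h : Fin 3 → ℝ) :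
    thQ k₃ k₄ k₅ S h
      = k₃ * (h 0 ^ 2 + h 1 ^ 2 + h 2 ^ 2) * (S 0 0 + S 1 1 + S 2 2) ^ 2
        + k₄ * (h 0 * (S 2 1 - S 1 2) + h 1 * (S 0 2 - S 2 0) + h 2 * (S 1 0 - S 0 1)) ^ 2
        + k₅ * ((h 1 * (S 1 0 - S 0 1) - h 2 * (S 0 2 - S 2 0)) ^ 2
          + (h 2 * (S 2 1 - S 1 2) - h 0 * (S 1 0 - S 0 1)) ^ 2
          + (h 0 * (S 0 2 - S 2 0) - h 1 * (S 2 1 - S 1 2)) ^ 2) := by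
  simp only [thQ, Fin.sum_univ_three]
  simp only [thE, kd, Fin.isValue, Fin.reduceEq, reduceIte]
  norm_num
  ring

/-- Tensor representation of the Oseen–Frank energy density: with `c := 2 vee(S_skw)`,
`S : Λ : S + (S⊗h) : Θ : (S⊗h)
  = k₁ tr(S)² + k₂ |c|² + k₃ |h|² tr(S)² + k₄ (h·c)² + k₅ |h×c|²`. -/
theorem energy_tensor_repr (k₁ k₂ k₃ k₄ k₅ : ℝ) (S : Matrix (Fin 3) (Fin 3) ℝ)
    (h : Fin 3 → ℝ) (c : Fin 3 → ℝ) (hc : c = (2 : ℝ) • vee (skwPart S)) :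
    lamQ k₁ k₂ S S + thQ k₃ k₄ k₅ S h
      = k₁ * (Matrix.trace S) ^ 2 + k₂ * normSq c + k₃ * normSq h * (Matrix.trace S) ^ 2
        + k₄ * dot3 h c ^ 2 + k₅ * normSq (cross3 h c) := by
  subst hc
  rw [lamQ_closed, thQ_closed]
  simp only [normSq, dot3, cross3, vee, skwPart, Matrix.trace, Matrix.diag,
    Fin.sum_univ_three, Matrix.smul_apply, Matrix.sub_apply, Matrix.transpose_apply,
    Pi.smul_apply, smul_eq_mul, Matrix.cons_val_zero, Matrix.cons_val_one,
    Matrix.head_cons, Matrix.cons_val_two, Matrix.tail_cons, Fin.isValue]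
  ring
end
end

section
/- Leslie stress dissipation identity: let μ₁,…,μ₆ ∈ ℝ, set λ := μ₂ + μ₃ (Parodi's relation), let d ∈ ℝ³ with |d| = 1, V ∈ ℝ^{3×3} and q ∈ ℝ³. Define e := −(I − d⊗d)(λ V_sym d + q) and T^L := μ₁ (d · V_sym d) d⊗d + μ₄ V_sym + (μ₅+μ₆)(d ⊗ (V_sym d))_sym + (μ₂+μ₃)(d ⊗ e)_sym + λ (d ⊗ (V_sym d))_skw + (d ⊗ e)_skw. Then T^L : V − (d × (V_skw d)) · (d × q) + λ (d × (V_sym d)) · (d × q) = (μ₁ + λ²)(d · V_sym d)² + μ₄ |V_sym|² + (μ₅ + μ₆ − λ²) |V_sym d|². -/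
open Matrix MeasureTheory
open scoped BigOperators

noncomputable section

set_option maxRecDepth 100000 in
set_option maxHeartbeats 8000000 in
/-- Leslie stress dissipation identity:
`T^L : V − (d × (V_skw d)) ⬝ (d × q) + λ (d × (V_sym d)) ⬝ (d × q)
  = (μ₁ + λ²)(d ⬝ V_sym d)² + μ₄ |V_sym|² + (μ₅ + μ₆ − λ²)|V_sym d|²`
under Parodi's relation `λ = μ₂ + μ₃`. -/
theorem leslie_stress_dissipation (μ₁ μ₂ μ₃ μ₄ μ₅ μ₆ lam : ℝ) (hlam : lam = μ₂ + μ₃)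
    (d : Fin 3 → ℝ) (hd : normSq d = 1) (V : Matrix (Fin 3) (Fin 3) ℝ) (q : Fin 3 → ℝ)
    (e : Fin 3 → ℝ)
    (he : e = -(Matrix.mulVec ((1 : Matrix (Fin 3) (Fin 3) ℝ) - outer d d)
        (lam • Matrix.mulVec (symPart V) d + q)))
    (TL : Matrix (Fin 3) (Fin 3) ℝ)
    (hTL : TL = (μ₁ * dot3 d (Matrix.mulVec (symPart V) d)) • outer d d
        + μ₄ • symPart V
        + (μ₅ + μ₆) • symPart (outer d (Matrix.mulVec (symPart V) d))
        + (μ₂ + μ₃) • symPart (outer d e)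
        + lam • skwPart (outer d (Matrix.mulVec (symPart V) d))
        + skwPart (outer d e)) :
    frob TL V - dot3 (cross3 d (Matrix.mulVec (skwPart V) d)) (cross3 d q)
        + lam * dot3 (cross3 d (Matrix.mulVec (symPart V) d)) (cross3 d q)
      = (μ₁ + lam ^ 2) * dot3 d (Matrix.mulVec (symPart V) d) ^ 2
        + μ₄ * frobSq (symPart V)
        + (μ₅ + μ₆ - lam ^ 2) * normSq (Matrix.mulVec (symPart V) d) := by
  subst hlam he hTL
  have hd' : d 0 ^ 2 + d 1 ^ 2 + d 2 ^ 2 = 1 := by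
    simpa [normSq, Fin.sum_univ_three] using hd
  simp only [frob, dot3, cross3, normSq, frobSq, symPart, skwPart, outer, Matrix.mulVec,
    dotProduct, Fin.sum_univ_three, Matrix.smul_apply, Matrix.add_apply,
    Matrix.sub_apply, Matrix.transpose_apply, Matrix.one_apply, Matrix.of_apply,
    Pi.add_apply, Pi.neg_apply, Pi.smul_apply, smul_eq_mul, Matrix.cons_val_zero,
    Matrix.cons_val_one, Matrix.head_cons, Matrix.cons_val_two, Matrix.tail_cons,
    Fin.isValue, Fin.reduceEq, reduceIte, if_true, if_false]
  linear_combination ((1/2:ℝ)*d 2*q 1*V 2 1 + (-1/2:ℝ)*d 2*q 1*V 1 2 + (1/2:ℝ)*d 2*q 0*V 2 0 + (-1/2:ℝ)*d 2*q 0*V 0 2 + (-1/2:ℝ)*d 1*q 2*V 2 1 + (1/2:ℝ)*d 1*q 2*V 1 2 + (1/2:ℝ)*d 1*q 0*V 1 0 + (-1/2:ℝ)*d 1*q 0*V 0 1 + (-1/2:ℝ)*d 0*q 2*V 2 0 + (1/2:ℝ)*d 0*q 2*V 0 2 + (-1/2:ℝ)*d 0*q 1*V 1 0 + (1/2:ℝ)*d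 0*q 1*V 0 1 + μ₃*d 2*q 2*V 2 2 + (1/2:ℝ)*μ₃*d 2*q 1*V 2 1 + (1/2:ℝ)*μ₃*d 2*q 1*V 1 2 + (1/2:ℝ)*μ₃*d 2*q 0*V 2 0 + (1/2:ℝ)*μ₃*d 2*q 0*V 0 2 + (1/2:ℝ)*μ₃*d 1*q 2*V 2 1 + (1/2:ℝ)*μ₃*d 1*q 2*V 1 2 + μ₃*d 1*q 1*V 1 1 + (1/2:ℝ)*μ₃*d 1*q 0*V 1 0 + (1/2:ℝ)*μ₃*d 1*q 0*V 0 1 + (1/2:ℝ)*μ₃*d 0*q 2*V 2 0 + (1/2:ℝ)*μ₃*d 0*q 2*V 0 2 + (1/2:ℝ)*μ₃*d 0*q 1*V 1 0 + (1/2:ℝ)*μ₃*d 0*q 1*V 0 1 + μ₃*d 0*q 0*V 0 0 + μ₂*d 2*q 2*V 2 2 + (1/2:ℝ)*μ₂*d 2*q 1*V 2 1 + (1/2:ℝ)*μ₂*d 2*q 1*V 1 2 + (1/2:ℝ)*μ₂*d 2*q 0*V 2 0 + (1/2:ℝ)*μ₂*d 2*q 0*V 0 2 + (1/2:ℝ)*μ₂*d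 1*q 2*V 2 1 + (1/2:ℝ)*μ₂*d 1*q 2*V 1 2 + μ₂*d 1*q 1*V 1 1 + (1/2:ℝ)*μ₂*d 1*q 0*V 1 0 + (1/2:ℝ)*μ₂*d 1*q 0*V 0 1 + (1/2:ℝ)*μ₂*d 0*q 2*V 2 0 + (1/2:ℝ)*μ₂*d 0*q 2*V 0 2 + (1/2:ℝ)*μ₂*d 0*q 1*V 1 0 + (1/2:ℝ)*μ₂*d 0*q 1*V 0 1 + μ₂*d 0*q 0*V 0 0) * hd'
end
end

section
/- Let d, d̃, w, w̃ ∈ ℝ³ with |d| = |d̃| = 1, d·w = 0 and d̃·w̃ = 0. Then (d − d̃)·(w − w̃) = (d×w − d̃×w̃)·(d̃×d). -/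
open Matrix MeasureTheory
open scoped BigOperators

noncomputable section

/-- For unit vectors `d, d̃` and `w ⟂ d`, `w̃ ⟂ d̃`:
`(d − d̃)⬝(w − w̃) = (d×w − d̃×w̃)⬝(d̃×d)`. -/
theorem director_difference_identity (d dt w wt : Fin 3 → ℝ)
    (hd : normSq d = 1) (hdt : normSq dt = 1)
    (hw : dot3 d w = 0) (hwt : dot3 dt wt = 0) :
    dot3 (d - dt) (w - wt) = dot3 (cross3 d w - cross3 dt wt) (cross3 dt d) := by
  simp only [dot3, normSq, cross3, Fin.sum_univ_three, Pi.sub_apply] at *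
  simp only [Matrix.cons_val_zero, Matrix.cons_val_one, Matrix.head_cons,
    Matrix.cons_val_two, Matrix.tail_cons]
  linear_combination (1 - (d 0 * dt 0 + d 1 * dt 1 + d 2 * dt 2)) * hw +
    (1 - (d 0 * dt 0 + d 1 * dt 1 + d 2 * dt 2)) * hwt +
    (dt 0 * w 0 + dt 1 * w 1 + dt 2 * w 2) * hd +
    (d 0 * wt 0 + d 1 * wt 1 + d 2 * wt 2) * hdt
end
end
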